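/- arXiv:1505.04955 — 2 statements merged into one kernel-verified Lean document; each statement's English description precedes it below -/
import Mathlib

section
/- With the protocol Λ_sup as above, the success probability is tr[Λ_sup(P_ν⊗P_ψ⊗P_φ)] = (c₁c₂/(c₁+c₂))·‖Ψ‖², where ‖Ψ‖² = 1 + 2Re(ᾱβ·tr(P_χP_ψP_φ)/(√c₁√c₂)). -/
open Matrix

/-- Partial trace over the first and third tensor factors of `ℂ²⊗H⊗H`. -/
noncomputable def ptrace13 {n : ℕ}
    (M : Matrix (Fin 2 × Fin n × Fin n) (Fin 2 × Fin n × Fin n) ℂ) :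
    Matrix (Fin n) (Fin n) ℂ :=
  fun i j => ∑ a : Fin 2, ∑ b : Fin n, M (a, i, b) (a, j, b)

/-- The controlled swap `V₁ = |0⟩⟨0|⊗I⊗I + |1⟩⟨1|⊗S` on `ℂ²⊗H⊗H`. -/
def cswap (n : ℕ) : Matrix (Fin 2 × Fin n × Fin n) (Fin 2 × Fin n × Fin n) ℂ :=
  fun p q => if p.1 = q.1 then
    (if p.1 = 0 then (if p.2 = q.2 then 1 else 0)
      else (if p.2.1 = q.2.2 ∧ p.2.2 = q.2.1 then 1 else 0))
    else 0

/-- `V₂ = I ⊗ I ⊗ |χ⟩⟨χ|`. -/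
def projThird {n : ℕ} (χ : Fin n → ℂ) :
    Matrix (Fin 2 × Fin n × Fin n) (Fin 2 × Fin n × Fin n) ℂ :=
  fun p q => if p.1 = q.1 ∧ p.2.1 = q.2.1 then χ p.2.2 * star (χ q.2.2) else 0

/-- `V₃ = |μ⟩⟨μ| ⊗ I ⊗ I`. -/
def projFirst {n : ℕ} (μ : Fin 2 → ℂ) :
    Matrix (Fin 2 × Fin n × Fin n) (Fin 2 × Fin n × Fin n) ℂ :=
  fun p q => if p.2 = q.2 then μ p.1 * star (μ q.1) else 0

lemma conj_vecMulVec {m k : Type*} [Fintype m] [Fintype k] [DecidableEq k]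
    (W : Matrix k m ℂ) (u : m → ℂ) :
    W * vecMulVec u (star u) * Wᴴ = vecMulVec (W *ᵥ u) (star (W *ᵥ u)) := by
  rw [vecMulVec_eq Unit, vecMulVec_eq Unit, star_mulVec, replicateCol_mulVec, replicateRow_vecMul,
    Matrix.mul_assoc, Matrix.mul_assoc, Matrix.mul_assoc]

lemma ptrace13_trace {n : ℕ} (M : Matrix (Fin 2 × Fin n × Fin n) (Fin 2 × Fin n × Fin n) ℂ) :
    (ptrace13 M).trace = ∑ p : Fin 2 × Fin n × Fin n, M p p := by
  simp only [ptrace13, Matrix.trace, Matrix.diag, Fintype.sum_prod_type]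
  exact Finset.sum_comm

lemma cswap_mulVec {n : ℕ} (u : Fin 2 × Fin n × Fin n → ℂ) :
    cswap n *ᵥ u = fun p => if p.1 = 0 then u p else u (p.1, p.2.2, p.2.1) := by
  funext p
  obtain ⟨a, i, j⟩ := p
  simp only [mulVec, dotProduct, cswap, Fintype.sum_prod_type]
  rw [Fin.sum_univ_two]
  fin_cases a <;>
    simp [Prod.ext_iff, ite_and, Finset.sum_ite_eq, Finset.sum_ite_eq']

lemma projThird_mulVec {n : ℕ} (χ : Fin n → ℂ) (v : Fin 2 × Fin n × Fin n → ℂ) :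
    projThird χ *ᵥ v = fun p => χ p.2.2 * ∑ l, star (χ l) * v (p.1, p.2.1, l) := by
  funext p
  obtain ⟨a, i, j⟩ := p
  simp only [mulVec, dotProduct, projThird, Fintype.sum_prod_type]
  rw [Fin.sum_univ_two]
  fin_cases a <;>
    simp [ite_and, Finset.sum_ite_eq, Finset.sum_ite_eq', Finset.mul_sum, mul_assoc, mul_add]

lemma projFirst_mulVec {n : ℕ} (μ : Fin 2 → ℂ) (v : Fin 2 × Fin n × Fin n → ℂ) :
    projFirst μ *ᵥ v = fun p => μ p.1 * ∑ b, star (μ b) * v (b, p.2) := by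
  funext p
  obtain ⟨a, i, j⟩ := p
  simp only [mulVec, dotProduct, projFirst, Fintype.sum_prod_type]
  simp [Prod.ext_iff, ite_and, Finset.sum_ite_eq, Finset.sum_ite_eq', Finset.mul_sum, mul_assoc, mul_add]

lemma key_mulVec {n : ℕ} (χ ψ φ : Fin n → ℂ) (μ : Fin 2 → ℂ) (α β : ℂ) :
    (projFirst μ * projThird χ * cswap n) *ᵥ (fun p => ![α, β] p.1 * ψ p.2.1 * φ p.2.2)
    = fun p => μ p.1 *
        ((star (μ 0) * α * (star χ ⬝ᵥ φ)) * ψ p.2.1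
          + (star (μ 1) * β * (star χ ⬝ᵥ ψ)) * φ p.2.1) * χ p.2.2 := by
  rw [← mulVec_mulVec, ← mulVec_mulVec, cswap_mulVec, projThird_mulVec, projFirst_mulVec]
  funext p
  obtain ⟨a, i, j⟩ := p
  simp only [Fin.sum_univ_two, Fin.isValue, Matrix.cons_val_zero, Matrix.cons_val_one,
    Matrix.head_cons, if_true, eq_self_iff_true, reduceIte, dotProduct, Pi.star_apply]
  have h1 : ¬((1 : Fin 2) = 0) := by decide
  simp only [if_neg h1]
  have e1 : ∑ l, star (χ l) * (α * ψ i * φ l) = α * ψ i * ∑ l, star (χ l) * φ l := by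
    rw [Finset.mul_sum]; exact Finset.sum_congr rfl fun l _ => by ring
  have e2 : ∑ l, star (χ l) * (β * ψ l * φ i) = β * φ i * ∑ l, star (χ l) * ψ l := by
    rw [Finset.mul_sum]; exact Finset.sum_congr rfl fun l _ => by ring
  rw [e1, e2]
  ring

lemma prod_sum_factor {n : ℕ} (F : Fin 2 → ℂ) (G H : Fin n → ℂ) :
    ∑ p : Fin 2 × Fin n × Fin n, F p.1 * (G p.2.1 * H p.2.2)
    = (∑ a, F a) * ((∑ i, G i) * (∑ j, H j)) := by
  rw [Fintype.sum_prod_type]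
  simp_rw [Fintype.sum_prod_type]
  simp_rw [← Finset.mul_sum, ← Finset.sum_mul]

lemma sum_factor {n : ℕ} (f : Fin 2 → ℂ) (g h : Fin n → ℂ) :
    ∑ p : Fin 2 × Fin n × Fin n, (f p.1 * g p.2.1 * h p.2.2) * star (f p.1 * g p.2.1 * h p.2.2)
    = (∑ a, f a * star (f a)) * ((∑ i, g i * star (g i)) * (∑ j, h j * star (h j))) := by
  rw [← prod_sum_factor (fun a => f a * star (f a)) (fun i => g i * star (g i))
      (fun j => h j * star (h j))]
  exact Finset.sum_congr rfl fun p _ => by simp only [star_mul']; ring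

lemma trace_vecMulVec {m : Type*} [Fintype m] (w : m → ℂ) :
    (vecMulVec w (star w)).trace = ∑ p, w p * star (w p) := by
  simp [Matrix.trace, Matrix.diag, vecMulVec_apply]

lemma expand_z {n : ℕ} (ψ φ : Fin n → ℂ) (t s : ℂ) :
    ∑ i, (t * ψ i + s * φ i) * star (t * ψ i + s * φ i)
    = t * star t * (star ψ ⬝ᵥ ψ) + s * star s * (star φ ⬝ᵥ φ)
      + t * star s * (star φ ⬝ᵥ ψ) + s * star t * (star ψ ⬝ᵥ φ) := by
  simp only [dotProduct, Pi.star_apply, Finset.mul_sum, ← Finset.sum_add_distrib]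
  exact Finset.sum_congr rfl fun i _ => by simp only [star_add, star_mul']; ring

/-- Success probability of the superposition protocol:
`tr[Λ_sup(P_ν⊗P_ψ⊗P_φ)] = (c₁c₂/(c₁+c₂))·(1 + 2Re(ᾱβ tr(P_χP_ψP_φ)/(√c₁√c₂)))`. -/
theorem superposition_protocol_success_probability {n : ℕ}
    (χ ψ φ : Fin n → ℂ)
    (hχ : star χ ⬝ᵥ χ = 1) (hψ : star ψ ⬝ᵥ ψ = 1) (hφ : star φ ⬝ᵥ φ = 1)
    (c₁ c₂ : ℝ) (hc₁ : 0 < c₁) (hc₁' : c₁ ≤ 1) (hc₂ : 0 < c₂) (hc₂' : c₂ ≤ 1)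
    (hover₁ : ‖star χ ⬝ᵥ ψ‖ ^ 2 = c₁)
    (hover₂ : ‖star χ ⬝ᵥ φ‖ ^ 2 = c₂)
    (α β : ℂ) (hν : ‖α‖ ^ 2 + ‖β‖ ^ 2 = 1) :
    (ptrace13
        ((projFirst (fun a => ((Real.sqrt (c₁ + c₂))⁻¹ : ℂ) *
              ![(Real.sqrt c₁ : ℂ), (Real.sqrt c₂ : ℂ)] a) *
            projThird χ * cswap n) *
          vecMulVec (fun p => ![α, β] p.1 * ψ p.2.1 * φ p.2.2)
            (star fun p => ![α, β] p.1 * ψ p.2.1 * φ p.2.2) *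
          (projFirst (fun a => ((Real.sqrt (c₁ + c₂))⁻¹ : ℂ) *
              ![(Real.sqrt c₁ : ℂ), (Real.sqrt c₂ : ℂ)] a) *
            projThird χ * cswap n)ᴴ)).trace
      = (((c₁ * c₂ / (c₁ + c₂)) *
          (1 + 2 * (starRingEnd ℂ α * β *
              ((star χ ⬝ᵥ ψ) * (star ψ ⬝ᵥ φ) * (star φ ⬝ᵥ χ))
              / ((Real.sqrt c₁ : ℂ) * (Real.sqrt c₂ : ℂ))).re) : ℝ) : ℂ) := by
  set μ : Fin 2 → ℂ := fun a => ((Real.sqrt (c₁ + c₂))⁻¹ : ℂ) *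
      ![(Real.sqrt c₁ : ℂ), (Real.sqrt c₂ : ℂ)] a with hμdef
  rw [conj_vecMulVec, ptrace13_trace]
  simp_rw [vecMulVec_apply, Pi.star_apply]
  rw [key_mulVec]
  rw [sum_factor μ (fun i => (star (μ 0) * α * (star χ ⬝ᵥ φ)) * ψ i
      + (star (μ 1) * β * (star χ ⬝ᵥ ψ)) * φ i) χ]
  have hr : ((Real.sqrt (c₁ + c₂) : ℝ) : ℂ) * ((Real.sqrt (c₁ + c₂) : ℝ) : ℂ) = ((c₁ + c₂ : ℝ) : ℂ) := by
    rw [← Complex.ofReal_mul, Real.mul_self_sqrt (by positivity)]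
  have hrne : ((Real.sqrt (c₁ + c₂) : ℝ) : ℂ) ≠ 0 := by
    simp [Real.sqrt_eq_zero', not_le]
    positivity
  have hμsum : ∑ a, μ a * star (μ a) = 1 := by
    rw [Fin.sum_univ_two, hμdef]
    simp only [Matrix.cons_val_zero, Matrix.cons_val_one, Matrix.head_cons, star_mul',
      Complex.star_def, Complex.conj_ofReal, map_inv₀]
    field_simp
    rw [sq, sq, sq]
    rw [← Complex.ofReal_mul, ← Complex.ofReal_mul, ← Complex.ofReal_mul,
      Real.mul_self_sqrt hc₁.le, Real.mul_self_sqrt hc₂.le,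
      Real.mul_self_sqrt (by positivity : (0:ℝ) ≤ c₁ + c₂), ← Complex.ofReal_add]
  have hχsum : ∑ j, χ j * star (χ j) = 1 := by
    rw [← hχ]; exact Finset.sum_congr rfl fun j _ => (mul_comm _ _)
  rw [hμsum, hχsum, expand_z, hψ, hφ]
  have hs1 : ((Real.sqrt c₁ : ℝ) : ℂ) * ((Real.sqrt c₁ : ℝ) : ℂ) = ((c₁ : ℝ) : ℂ) := by
    rw [← Complex.ofReal_mul, Real.mul_self_sqrt hc₁.le]
  have hs2 : ((Real.sqrt c₂ : ℝ) : ℂ) * ((Real.sqrt c₂ : ℝ) : ℂ) = ((c₂ : ℝ) : ℂ) := by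
    rw [← Complex.ofReal_mul, Real.mul_self_sqrt hc₂.le]
  have hs1ne : ((Real.sqrt c₁ : ℝ) : ℂ) ≠ 0 := by
    simp [Real.sqrt_eq_zero', not_le]; positivity
  have hs2ne : ((Real.sqrt c₂ : ℝ) : ℂ) ≠ 0 := by
    simp [Real.sqrt_eq_zero', not_le]; positivity
  have hA2 : (star χ ⬝ᵥ ψ) * (starRingEnd ℂ) (star χ ⬝ᵥ ψ)
      = ((Real.sqrt c₁ : ℝ) : ℂ) * ((Real.sqrt c₁ : ℝ) : ℂ) := by
    rw [Complex.mul_conj, Complex.normSq_eq_norm_sq, hover₁, hs1]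
  have hB2 : (star χ ⬝ᵥ φ) * (starRingEnd ℂ) (star χ ⬝ᵥ φ)
      = ((Real.sqrt c₂ : ℝ) : ℂ) * ((Real.sqrt c₂ : ℝ) : ℂ) := by
    rw [Complex.mul_conj, Complex.normSq_eq_norm_sq, hover₂, hs2]
  have hab : α * (starRingEnd ℂ) α + β * (starRingEnd ℂ) β = 1 := by
    rw [Complex.mul_conj, Complex.mul_conj, ← Complex.ofReal_add]
    rw [Complex.normSq_eq_norm_sq, Complex.normSq_eq_norm_sq,
      hν, Complex.ofReal_one]
  have hDconj : star φ ⬝ᵥ ψ = star (star ψ ⬝ᵥ φ) := star_dotProduct φ ψ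
  have hBconj : star φ ⬝ᵥ χ = star (star χ ⬝ᵥ φ) := star_dotProduct φ χ
  have hμ0 : μ 0 = ((Real.sqrt (c₁ + c₂) : ℝ) : ℂ)⁻¹ * ((Real.sqrt c₁ : ℝ) : ℂ) := by
    simp [hμdef]
  have hμ1 : μ 1 = ((Real.sqrt (c₁ + c₂) : ℝ) : ℂ)⁻¹ * ((Real.sqrt c₂ : ℝ) : ℂ) := by
    simp [hμdef]
  rw [hμ0, hμ1, hDconj, hBconj]
  rw [Complex.ofReal_mul, Complex.ofReal_add, Complex.ofReal_one, ← Complex.add_conj]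
  simp only [Complex.star_def, _root_.map_mul, map_inv₀, map_div₀, Complex.conj_conj,
    Complex.conj_ofReal, Complex.ofReal_div, Complex.ofReal_mul, Complex.ofReal_add]
  rw [← hs1, ← hs2]
  have hr2 : ((Real.sqrt c₁ : ℝ) : ℂ) * ((Real.sqrt c₁ : ℝ) : ℂ)
      + ((Real.sqrt c₂ : ℝ) : ℂ) * ((Real.sqrt c₂ : ℝ) : ℂ)
      = ((Real.sqrt (c₁ + c₂) : ℝ) : ℂ) * ((Real.sqrt (c₁ + c₂) : ℝ) : ℂ) := by
    rw [hs1, hs2, hr, Complex.ofReal_add]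
  rw [hr2]
  field_simp
  linear_combination
    ((((Real.sqrt c₁ : ℝ) : ℂ) * ((Real.sqrt c₁ : ℝ) : ℂ)) * α * (starRingEnd ℂ) α) * hB2 +
    ((((Real.sqrt c₂ : ℝ) : ℂ) * ((Real.sqrt c₂ : ℝ) : ℂ)) * β * (starRingEnd ℂ) β) * hA2 +
    (((Real.sqrt c₁ : ℝ) : ℂ) * ((Real.sqrt c₁ : ℝ) : ℂ) *
      ((Real.sqrt c₂ : ℝ) : ℂ) * ((Real.sqrt c₂ : ℝ) : ℂ)) * hab
end

section
/- Let χ ∈ H be a unit vector and define the d-party protocol Λ_sup^d = Λ₄∘Λ₃∘Λ₂∘Λ₁ on ℂ^d⊗H^{⊗d} with V₁ = Σ_{i=1}^d |i⟩⟨i|⊗S_{1,i}, V₂ = I_d⊗I⊗(|χ⟩⟨χ|)^{⊗(d-1)}, V₃ = P_{μ_d}⊗I^{⊗d} where μ_d ∝ Σ_i (Π_{k≠i}√c_k)^{-1}|i⟩ normalized, and Λ₄ = tr over all factors except the second H factor. Then for ν = Σ_i α_i|i⟩ a unit vector in ℂ^d and unit vectors ψ_i ∈ H with |⟨χ|ψ_i⟩|²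 = c_i > 0, Λ_sup^d(P_ν⊗⊗_iP_{ψ_i}) is proportional to |Ψ_d⟩⟨Ψ_d| with Ψ_d = Σ_i α_i (Π_{k≠i}⟨χ|ψ_k⟩/Π_{k≠i}|⟨χ|ψ_k⟩|)ψ_i. -/
open Matrix Finset

/-- The matrix of the unitary `S_{1,i}` swapping the factor `i0` and the factor `i`
of `H^{⊗d}` (basis vectors of `H^{⊗d}` are indexed by functions `Fin d → Fin n`). -/
def swapFactors {n d : ℕ} (i0 i : Fin d) :
    Matrix (Fin d → Fin n) (Fin d → Fin n) ℂ :=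
  fun f g => if f = g ∘ (Equiv.swap i0 i) then 1 else 0

/-- `V₁ = Σ_i |i⟩⟨i|⊗S_{1,i}` on `ℂ^d ⊗ H^{⊗d}`. -/
def V1d {n d : ℕ} (i0 : Fin d) :
    Matrix (Fin d × (Fin d → Fin n)) (Fin d × (Fin d → Fin n)) ℂ :=
  fun p q => if p.1 = q.1 then swapFactors i0 p.1 p.2 q.2 else 0

/-- `V₂ = I_d ⊗ I ⊗ |χ⟩⟨χ|^{⊗(d-1)}`. -/
def V2d {n d : ℕ} (i0 : Fin d) (χ : Fin n → ℂ) :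
    Matrix (Fin d × (Fin d → Fin n)) (Fin d × (Fin d → Fin n)) ℂ :=
  fun p q => if p.1 = q.1 ∧ p.2 i0 = q.2 i0 then
    ∏ k ∈ univ.erase i0, χ (p.2 k) * star (χ (q.2 k)) else 0

/-- `V₃ = P_{μ} ⊗ I^{⊗d}`. -/
def V3d {n d : ℕ} (μ : Fin d → ℂ) :
    Matrix (Fin d × (Fin d → Fin n)) (Fin d × (Fin d → Fin n)) ℂ :=
  fun p q => if p.2 = q.2 then μ p.1 * star (μ q.1) else 0

/-- `Λ₄`: the partial trace over all tensor factors of `ℂ^d ⊗ H^{⊗d}` except the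
`H`-factor at position `i0`. -/
noncomputable def ptrAllButSecond {n d : ℕ} (i0 : Fin d)
    (M : Matrix (Fin d × (Fin d → Fin n)) (Fin d × (Fin d → Fin n)) ℂ) :
    Matrix (Fin n) (Fin n) ℂ :=
  fun i j => ∑ a : Fin d, ∑ g : Fin d → Fin n,
    if g i0 = j then M (a, Function.update g i0 i) (a, g) else 0

lemma V1_mulVec {n d : ℕ} (i0 : Fin d) (α : Fin d → ℂ) (ψ : Fin d → Fin n → ℂ)
    (a : Fin d) (f : Fin d → Fin n) :
    (V1d i0 *ᵥ fun p => α p.1 * ∏ k, ψ k (p.2 k)) (a, f)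
      = α a * ∏ k, ψ (Equiv.swap i0 a k) (f k) := by
  simp only [mulVec, dotProduct, Fintype.sum_prod_type, V1d, swapFactors, ite_mul, zero_mul]
  simp only [Finset.sum_ite_irrel, Finset.sum_const_zero]
  rw [Finset.sum_ite_eq univ a]
  simp only [mem_univ, if_pos, one_mul]
  have hcond : ∀ g : Fin d → Fin n, (f = g ∘ Equiv.swap i0 a) ↔ (g = f ∘ Equiv.swap i0 a) := by
    intro g
    constructor
    · intro h; funext k
      have := congrFun h (Equiv.swap i0 a k)
      simpa [Equiv.swap_apply_self] using this.symm
    · intro h; funext k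
      have := congrFun h (Equiv.swap i0 a k)
      simpa [Equiv.swap_apply_self] using this.symm
  simp only [hcond]
  rw [Finset.sum_ite_eq' univ (f ∘ Equiv.swap i0 a) (fun g => α a * ∏ k, ψ k (g k))]
  simp only [mem_univ, if_pos, Function.comp_apply]
  congr 1
  calc ∏ k, ψ k (f (Equiv.swap i0 a k))
      = ∏ k, ψ (Equiv.swap i0 a (Equiv.swap i0 a k)) (f (Equiv.swap i0 a k)) := by
        simp [Equiv.swap_apply_self]
    _ = ∏ k, ψ (Equiv.swap i0 a k) (f k) :=
        Equiv.prod_comp (Equiv.swap i0 a) (fun m => ψ (Equiv.swap i0 a m) (f m))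

lemma sum_pi_cond {n d : ℕ} (i0 : Fin d) (j : Fin n) (h : Fin d → Fin n → ℂ) :
    (∑ g : Fin d → Fin n, if g i0 = j then ∏ k ∈ univ.erase i0, h k (g k) else 0)
      = ∏ k ∈ univ.erase i0, ∑ m, h k m := by
  set F : Fin d → Fin n → ℂ :=
    fun k m => if k = i0 then (if m = j then 1 else 0) else h k m with hF
  have key : ∀ g : Fin d → Fin n,
      (if g i0 = j then ∏ k ∈ univ.erase i0, h k (g k) else 0)
        = ∏ k, F k (g k) := by
    intro g
    rw [← Finset.mul_prod_erase univ (fun k => F k (g k)) (mem_univ i0)]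
    have h1 : F i0 (g i0) = if g i0 = j then 1 else 0 := by simp [hF]
    have h2 : ∏ k ∈ univ.erase i0, F k (g k) = ∏ k ∈ univ.erase i0, h k (g k) :=
      Finset.prod_congr rfl fun k hk => by simp [hF, Finset.ne_of_mem_erase hk]
    rw [h1, h2]
    split_ifs <;> simp
  simp only [key]
  rw [← Fintype.piFinset_univ, ← Finset.prod_univ_sum]
  rw [← Finset.mul_prod_erase univ (fun k => ∑ m, F k m) (mem_univ i0)]
  have h1 : (∑ m, F i0 m) = 1 := by simp [hF]
  have h2 : ∏ k ∈ univ.erase i0, (∑ m, F k m) = ∏ k ∈ univ.erase i0, ∑ m, h k m :=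
    Finset.prod_congr rfl fun k hk => Finset.sum_congr rfl fun m _ => by
      simp [hF, Finset.ne_of_mem_erase hk]
  rw [h1, h2, one_mul]

lemma prod_erase_swap {d : ℕ} (i0 a : Fin d) (F : Fin d → ℂ) :
    ∏ k ∈ univ.erase i0, F (Equiv.swap i0 a k) = ∏ k ∈ univ.erase a, F k := by
  refine Finset.prod_nbij' (fun k => Equiv.swap i0 a k) (fun k => Equiv.swap i0 a k)
    ?_ ?_ ?_ ?_ ?_
  · intro k hk
    simp only [mem_erase, mem_univ, and_true] at hk ⊢
    intro hcon
    apply hk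
    have : Equiv.swap i0 a k = Equiv.swap i0 a i0 := by rw [hcon, Equiv.swap_apply_left]
    exact (Equiv.swap i0 a).injective this
  · intro k hk
    simp only [mem_erase, mem_univ, and_true] at hk ⊢
    intro hcon
    apply hk
    have : Equiv.swap i0 a k = Equiv.swap i0 a a := by rw [hcon, Equiv.swap_apply_right]
    exact (Equiv.swap i0 a).injective this
  · intro k _; simp
  · intro k _; simp
  · intro k _; rfl

lemma V2_mulVec {n d : ℕ} (i0 : Fin d) (χ : Fin n → ℂ) (α : Fin d → ℂ)
    (ψ : Fin d → Fin n → ℂ) (a : Fin d) (f : Fin d → Fin n) :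
    (V2d i0 χ *ᵥ fun p => α p.1 * ∏ k, ψ (Equiv.swap i0 p.1 k) (p.2 k)) (a, f)
      = α a * ψ a (f i0) * (∏ k ∈ univ.erase i0, χ (f k))
          * ∏ j ∈ univ.erase a, ∑ m, star (χ m) * ψ j m := by
  simp only [mulVec, dotProduct, Fintype.sum_prod_type, V2d, ite_and, ite_mul, zero_mul]
  simp only [Finset.sum_ite_irrel, Finset.sum_const_zero]
  rw [Finset.sum_ite_eq univ a]
  simp only [mem_univ, if_pos]
  set C : ℂ := α a * ψ a (f i0) * ∏ k ∈ univ.erase i0, χ (f k) with hC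
  have step : ∀ g : Fin d → Fin n,
      (if f i0 = g i0 then
        (∏ k ∈ univ.erase i0, χ (f k) * star (χ (g k)))
          * (α a * ∏ k, ψ (Equiv.swap i0 a k) (g k)) else 0)
      = if g i0 = f i0 then
          C * ∏ k ∈ univ.erase i0, star (χ (g k)) * ψ (Equiv.swap i0 a k) (g k) else 0 := by
    intro g
    by_cases h : f i0 = g i0
    · rw [if_pos h, if_pos h.symm]
      rw [Finset.prod_mul_distrib, Finset.prod_mul_distrib,
        ← Finset.mul_prod_erase univ (fun k => ψ (Equiv.swap i0 a k) (g k)) (mem_univ i0),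
        Equiv.swap_apply_left, ← h, hC]
      ring
    · rw [if_neg h, if_neg (fun hh => h hh.symm)]
  simp only [step]
  have factor : (∑ g : Fin d → Fin n, if g i0 = f i0 then
      C * ∏ k ∈ univ.erase i0, star (χ (g k)) * ψ (Equiv.swap i0 a k) (g k) else 0)
    = C * ∑ g : Fin d → Fin n, if g i0 = f i0 then
      (∏ k ∈ univ.erase i0, star (χ (g k)) * ψ (Equiv.swap i0 a k) (g k)) else 0 := by
    rw [Finset.mul_sum]
    exact Finset.sum_congr rfl fun g _ => by split_ifs <;> simp
  rw [factor, sum_pi_cond i0 (f i0) (fun k m => star (χ m) * ψ (Equiv.swap i0 a k) m)]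
  rw [prod_erase_swap i0 a (fun j => ∑ m, star (χ m) * ψ j m)]

lemma V3_mulVec {n d : ℕ} (μ : Fin d → ℂ)
    (y : Fin d × (Fin d → Fin n) → ℂ) (a : Fin d) (f : Fin d → Fin n) :
    (V3d μ *ᵥ y) (a, f) = μ a * ∑ b, star (μ b) * y (b, f) := by
  simp only [mulVec, dotProduct, Fintype.sum_prod_type, V3d, ite_mul, zero_mul]
  rw [Finset.mul_sum]
  refine Finset.sum_congr rfl fun b _ => ?_
  rw [Finset.sum_ite_eq univ f (fun g => μ a * star (μ b) * y (b, g))]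
  simp [mul_assoc]

lemma sum_pi_cond_const {n d : ℕ} (i0 : Fin d) (j : Fin n) (C : ℂ) (h : Fin d → Fin n → ℂ) :
    (∑ g : Fin d → Fin n, if g i0 = j then C * ∏ k ∈ univ.erase i0, h k (g k) else 0)
      = C * ∏ k ∈ univ.erase i0, ∑ m, h k m := by
  rw [← sum_pi_cond i0 j h, Finset.mul_sum]
  exact Finset.sum_congr rfl fun g _ => by split_ifs <;> simp

lemma sandwich {P : Type*} [Fintype P] (M : Matrix P P ℂ) (v : P → ℂ) :
    M * vecMulVec v (star v) * Mᴴ = vecMulVec (M *ᵥ v) (star (M *ᵥ v)) := by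
  ext p q
  simp only [mul_apply, vecMulVec_apply, conjTranspose_apply, mulVec, dotProduct,
    Pi.star_apply, star_sum, star_mul', Finset.sum_mul, Finset.mul_sum]
  refine Finset.sum_congr rfl fun s _ => Finset.sum_congr rfl fun r _ => ?_
  ring

lemma main_aux {n d : ℕ} (i0 : Fin d) (χ : Fin n → ℂ) (μ α : Fin d → ℂ)
    (ψ : Fin d → Fin n → ℂ) (Ψ : Fin n → ℂ) (τ : ℂ)
    (hΦ : ∀ m, (∑ b, star (μ b) * (α b * ψ b m *
        ∏ j ∈ univ.erase b, ∑ m', star (χ m') * ψ j m')) = τ * Ψ m) :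
    ∃ t : ℂ, ptrAllButSecond i0 ((V3d μ * V2d i0 χ * V1d i0) *
        vecMulVec (fun p => α p.1 * ∏ k, ψ k (p.2 k))
          (star fun p => α p.1 * ∏ k, ψ k (p.2 k)) *
        (V3d μ * V2d i0 χ * V1d i0)ᴴ)
      = t • vecMulVec Ψ (star Ψ) := by
  set v : Fin d × (Fin d → Fin n) → ℂ := fun p => α p.1 * ∏ k, ψ k (p.2 k) with hv
  set u : Fin d × (Fin d → Fin n) → ℂ := (V3d μ * V2d i0 χ * V1d i0) *ᵥ v with hu
  have hV1 : (V1d i0 *ᵥ v) = fun p : Fin d × (Fin d → Fin n) =>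
      α p.1 * ∏ k, ψ (Equiv.swap i0 p.1 k) (p.2 k) := by
    funext p
    obtain ⟨a, f⟩ := p
    exact V1_mulVec i0 α ψ a f
  have huval : ∀ (a : Fin d) (f : Fin d → Fin n),
      u (a, f) = μ a * (∏ k ∈ univ.erase i0, χ (f k)) * (τ * Ψ (f i0)) := by
    intro a f
    rw [hu, ← Matrix.mulVec_mulVec, ← Matrix.mulVec_mulVec, hV1, V3_mulVec]
    have : ∀ b : Fin d, (V2d i0 χ *ᵥ fun p : Fin d × (Fin d → Fin n) =>
        α p.1 * ∏ k, ψ (Equiv.swap i0 p.1 k) (p.2 k)) (b, f)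
        = α b * ψ b (f i0) * (∏ k ∈ univ.erase i0, χ (f k))
          * ∏ j ∈ univ.erase b, ∑ m, star (χ m) * ψ j m := fun b => V2_mulVec i0 χ α ψ b f
    simp only [this]
    rw [← hΦ (f i0), Finset.mul_sum, Finset.mul_sum]
    refine Finset.sum_congr rfl fun b _ => ?_
    ring
  refine ⟨(∑ a, μ a * star (μ a)) * (τ * star τ)
      * ∏ k ∈ univ.erase i0, ∑ m, χ m * star (χ m), ?_⟩
  rw [sandwich]
  ext i j
  simp only [ptrAllButSecond, vecMulVec_apply, Pi.star_apply, Pi.smul_apply,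
    Matrix.smul_apply, smul_eq_mul]
  have key : ∀ (a : Fin d) (g : Fin d → Fin n),
      (if g i0 = j then u (a, Function.update g i0 i) * star (u (a, g)) else 0)
        = (if g i0 = j then (μ a * star (μ a) * (τ * star τ) * (Ψ i * star (Ψ j)))
            * ∏ k ∈ univ.erase i0, (χ (g k) * star (χ (g k))) else 0) := by
    intro a g
    by_cases hg : g i0 = j
    · rw [if_pos hg, if_pos hg, huval, huval]
      have e1 : (∏ k ∈ univ.erase i0, χ (Function.update g i0 i k))
          = ∏ k ∈ univ.erase i0, χ (g k) :=
        Finset.prod_congr rfl fun k hk => by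
          rw [Function.update_of_ne (Finset.ne_of_mem_erase hk)]
      rw [e1, Function.update_self, hg]
      simp only [star_mul', star_prod]
      rw [Finset.prod_mul_distrib]
      ring
    · rw [if_neg hg, if_neg hg]
  simp only [← hu, key]
  simp only [sum_pi_cond_const i0 j _ (fun _ m => χ m * star (χ m))]
  rw [← Finset.sum_mul, ← Finset.sum_mul, ← Finset.sum_mul]
  ring

/-- The `d`-party superposition protocol `Λ_sup^d = Λ₄∘Λ₃∘Λ₂∘Λ₁` maps
`P_ν ⊗ ⊗_i P_{ψ_i}` (with `ν = Σ_i α_i|i⟩` and `|⟨χ|ψ_i⟩|² = c_i > 0`) to a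
multiple of `|Ψ_d⟩⟨Ψ_d|`, where
`Ψ_d = Σ_i α_i (Π_{k≠i}⟨χ|ψ_k⟩/Π_{k≠i}|⟨χ|ψ_k⟩|)ψ_i`. -/
theorem multi_superposition_protocol {n d : ℕ} (hd : 2 ≤ d)
    (χ : Fin n → ℂ) (hχ : star χ ⬝ᵥ χ = 1)
    (ψ : Fin d → (Fin n → ℂ)) (hψ : ∀ i, star (ψ i) ⬝ᵥ ψ i = 1)
    (c : Fin d → ℝ) (hc : ∀ i, 0 < c i) (hc' : ∀ i, c i ≤ 1)
    (hover : ∀ i, ‖star χ ⬝ᵥ ψ i‖ ^ 2 = c i)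
    (α : Fin d → ℂ) (hα : ∑ i, ‖α i‖ ^ 2 = 1) :
    ∃ t : ℂ,
      ptrAllButSecond (⟨0, by omega⟩ : Fin d)
        ((V3d (fun a => ((Real.sqrt (∑ b, (∏ k ∈ univ.erase b, c k)⁻¹))⁻¹ : ℂ) *
              ((Real.sqrt (∏ k ∈ univ.erase a, c k) : ℂ))⁻¹) *
            V2d (⟨0, by omega⟩ : Fin d) χ * V1d (⟨0, by omega⟩ : Fin d)) *
          vecMulVec (fun p => α p.1 * ∏ k, ψ k (p.2 k))
            (star fun p => α p.1 * ∏ k, ψ k (p.2 k)) *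
          (V3d (fun a => ((Real.sqrt (∑ b, (∏ k ∈ univ.erase b, c k)⁻¹))⁻¹ : ℂ) *
              ((Real.sqrt (∏ k ∈ univ.erase a, c k) : ℂ))⁻¹) *
            V2d (⟨0, by omega⟩ : Fin d) χ * V1d (⟨0, by omega⟩ : Fin d))ᴴ)
      = t • vecMulVec
          (fun i => ∑ a, α a * ((∏ k ∈ univ.erase a, (star χ ⬝ᵥ ψ k))
              / ((∏ k ∈ univ.erase a, ‖star χ ⬝ᵥ ψ k‖ : ℝ) : ℂ)) * ψ a i)
          (star fun i => ∑ a, α a * ((∏ k ∈ univ.erase a, (star χ ⬝ᵥ ψ k))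
              / ((∏ k ∈ univ.erase a, ‖star χ ⬝ᵥ ψ k‖ : ℝ) : ℂ)) * ψ a i) := by
  have habs : ∀ b : Fin d, Real.sqrt (∏ k ∈ univ.erase b, c k)
      = ∏ k ∈ univ.erase b, ‖star χ ⬝ᵥ ψ k‖ := by
    intro b
    rw [show (∏ k ∈ univ.erase b, c k)
        = (∏ k ∈ univ.erase b, ‖star χ ⬝ᵥ ψ k‖)^2 by
      rw [← Finset.prod_pow]; exact Finset.prod_congr rfl fun k _ => (hover k).symm]
    exact Real.sqrt_sq (Finset.prod_nonneg fun k _ => norm_nonneg _)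
  refine main_aux (⟨0, by omega⟩ : Fin d) χ _ α ψ _
    (((Real.sqrt (∑ b, (∏ k ∈ univ.erase b, c k)⁻¹))⁻¹ : ℂ)) ?_
  intro m
  rw [Finset.mul_sum]
  refine Finset.sum_congr rfl fun b _ => ?_
  have hdot : ∀ j, (∑ m', star (χ m') * ψ j m') = star χ ⬝ᵥ ψ j := fun j => rfl
  simp only [hdot, habs b]
  simp only [star_mul', star_inv₀, Complex.star_def, Complex.conj_ofReal]
  rw [div_eq_mul_inv]
  ring
end
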